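/- Let (ε, ◁) be a prioritized Extended Bundle Event Structure, C a configuration of ε with precedence partial order ⪯_C (generated by bundle enabling and disabling), and define ◁' = ◁ ∖ { (e,e') ∈ C × C | e' ⪯_C e }. Then the set of traces of (ε,◁) over C equals the set of traces of (ε,◁') over C. -/

import Mathlib

/-- Enabled events of an Extended Bundle Event Structure after the sequence `σ`. -/
def een {E : Type*} (dis : E → E → Prop) (bund : Set E → E → Prop) (σ : List E) : Set E :=
  {e | e ∉ σ ∧ (∀ X, bund X e → ∃ x ∈ X, x ∈ σ) ∧ ¬ ∃ e' ∈ σ, dis e e'}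

/-- `σ` is a trace w.r.t. the enabling function `en`. -/
def IsTrace {E : Type*} (en : List E → Set E) (σ : List E) : Prop :=
  ∀ i : Fin σ.length, σ.get i ∈ en (σ.take i)

/-- The priority condition on a sequence `σ`. -/
def PrioOK {E : Type*} (en : List E → Set E) (prio : E → E → Prop) (σ : List E) : Prop :=
  ∀ i, i < σ.length → ∀ j h : Fin σ.length,
    σ.get j ≠ σ.get h → σ.get j ∈ en (σ.take i) → σ.get h ∈ en (σ.take i) →
    prio (σ.get h) (σ.get j) → (j : ℕ) < h

/-- Precedence relation of an EBES on a configuration `C`: bundle enabling or disabling. -/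
def eprecC {E : Type*} (dis : E → E → Prop) (bund : Set E → E → Prop) (C : Set E)
    (a b : E) : Prop :=
  a ∈ C ∧ b ∈ C ∧ ((∃ X, bund X b ∧ a ∈ X) ∨ dis a b)

/-- Reflexive-transitive closure of precedence on `C`. -/
def epreC {E : Type*} (dis : E → E → Prop) (bund : Set E → E → Prop) (C : Set E) :
    E → E → Prop :=
  Relation.ReflTransGen (eprecC dis bund C)

section Aux

variable {E : Type*} {dis : E → E → Prop} {bund : Set E → E → Prop} {σ : List E}

lemma trace_nodup (hσ : IsTrace (een dis bund) σ) : σ.Nodup := by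
  have aux : ∀ i j : Fin σ.length, (i : ℕ) < (j : ℕ) → σ.get i ≠ σ.get j := by
    intro i j h hij
    apply (hσ j).1
    rw [← hij]
    rw [List.mem_take_iff_getElem]
    exact ⟨i, by simp [Nat.lt_min, i.2, h], rfl⟩
  rw [List.nodup_iff_injective_get]
  intro i j hij
  by_contra hne
  rcases Nat.lt_or_ge (i : ℕ) (j : ℕ) with h | h
  · exact aux i j h hij
  · exact aux j i (by omega) hij.symm

open Classical in
lemma indexOf_lt_of_mem_take [DecidableEq E] {x : E} {n : ℕ} (h : x ∈ σ.take n) :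
    σ.idxOf x < n := by
  have h1 : σ.idxOf x = (σ.take n).idxOf x := by
    conv_lhs => rw [← List.take_append_drop n σ]
    exact List.idxOf_append_of_mem h
  have h2 := List.idxOf_lt_length_of_mem h
  rw [h1]
  exact lt_of_lt_of_le h2 (by simpa using List.length_take_le n σ)

lemma mem_take_of_indexOf_lt [DecidableEq E] {x : E} {n : ℕ} (hx : x ∈ σ)
    (h : σ.idxOf x < n) : x ∈ σ.take n := by
  rw [List.mem_take_iff_getElem]
  have hl := List.idxOf_lt_length_of_mem hx
  exact ⟨σ.idxOf x, by omega, List.getElem_idxOf hl⟩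

/-- single precedence step gives strictly smaller index -/
lemma eprec_indexOf_lt [DecidableEq E]
    (hirr : ∀ e, ¬ dis e e)
    (hstab : ∀ X e, bund X e → ∀ e1 ∈ X, ∀ e2 ∈ X, e1 ≠ e2 → dis e1 e2)
    (hσ : IsTrace (een dis bund) σ)
    {a b : E} (hp : eprecC dis bund {x | x ∈ σ} a b) :
    σ.idxOf a < σ.idxOf b := by
  obtain ⟨ha, hb, hcase⟩ := hp
  have ha : a ∈ σ := ha
  have hb : b ∈ σ := hb
  have hnd := trace_nodup hσ
  have hma := List.idxOf_lt_length_of_mem ha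
  have hmb := List.idxOf_lt_length_of_mem hb
  set m := σ.idxOf a with hm
  set k := σ.idxOf b with hk
  have hga : σ.get ⟨m, hma⟩ = a := List.idxOf_get hma
  have hgb : σ.get ⟨k, hmb⟩ = b := List.idxOf_get hmb
  have hena := hσ ⟨m, hma⟩
  have henb := hσ ⟨k, hmb⟩
  rw [hga] at hena
  rw [hgb] at henb
  rcases hcase with ⟨X, hX, haX⟩ | hd
  · obtain ⟨x, hxX, hxk⟩ := henb.2.1 X hX
    by_cases hxa : x = a
    · subst hxa
      have hxlt : m < k := indexOf_lt_of_mem_take hxk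
      exact hxlt
    · have hdax : dis a x := hstab X b hX a haX x hxX (fun h => hxa h.symm)
      have hxσ : x ∈ σ := List.mem_of_mem_take hxk
      have hxnot : x ∉ σ.take m := fun hmem => hena.2.2 ⟨x, hmem, hdax⟩
      have h1 : σ.idxOf x < k := indexOf_lt_of_mem_take hxk
      have h2 : ¬ σ.idxOf x < m := fun h => hxnot (mem_take_of_indexOf_lt hxσ h)
      omega
  · have hab : a ≠ b := fun h => hirr a (h ▸ hd)
    have hbnot : b ∉ σ.take m := fun hmem => hena.2.2 ⟨b, hmem, hd⟩
    have h2 : ¬ k < m := fun h => hbnot (mem_take_of_indexOf_lt hb h)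
    have hne : m ≠ k := fun h => hab (by rw [← hga, ← hgb]; congr 1; exact Fin.ext h)
    omega

lemma epre_indexOf_le [DecidableEq E]
    (hirr : ∀ e, ¬ dis e e)
    (hstab : ∀ X e, bund X e → ∀ e1 ∈ X, ∀ e2 ∈ X, e1 ≠ e2 → dis e1 e2)
    (hσ : IsTrace (een dis bund) σ)
    {a b : E} (hp : epreC dis bund {x | x ∈ σ} a b) :
    σ.idxOf a ≤ σ.idxOf b := by
  induction hp with
  | refl => exact le_rfl
  | tail _ hstep ih =>
      exact le_of_lt (lt_of_le_of_lt ih (eprec_indexOf_lt hirr hstab hσ hstep))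

end Aux

/-- with respect to a configuration `C` of an EBES, priority pairs
`(e, e')` with `e' ⪯_C e` can be ignored without changing the traces over `C`. -/
theorem pebes_priority_ignorance {E : Type*} (dis : E → E → Prop)
    (bund : Set E → E → Prop) (prio : E → E → Prop)
    (hirr : ∀ e, ¬ dis e e)
    (hstab : ∀ X e, bund X e → ∀ e1 ∈ X, ∀ e2 ∈ X, e1 ≠ e2 → dis e1 e2)
    (hacyc : ∀ e, ¬ Relation.TransGen prio e e)
    (C : Set E) (hC : ∃ σ : List E, IsTrace (een dis bund) σ ∧ {e | e ∈ σ} = C) :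
    {σ : List E | (IsTrace (een dis bund) σ ∧ PrioOK (een dis bund) prio σ) ∧
        {x | x ∈ σ} = C} =
      {σ : List E | (IsTrace (een dis bund) σ ∧
          PrioOK (een dis bund)
            (fun e e' => prio e e' ∧ ¬ (e ∈ C ∧ e' ∈ C ∧ epreC dis bund C e' e)) σ) ∧
        {x | x ∈ σ} = C} := by
  classical
  ext σ
  simp only [Set.mem_setOf_eq]
  constructor
  · rintro ⟨⟨ht, hp⟩, hset⟩
    exact ⟨⟨ht, fun i hi j h hne hj hh hpr => hp i hi j h hne hj hh hpr.1⟩, hset⟩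
  · rintro ⟨⟨ht, hp⟩, hset⟩
    refine ⟨⟨ht, fun i hi j h hne hj hh hpr => ?_⟩, hset⟩
    by_cases hrm : σ.get h ∈ C ∧ σ.get j ∈ C ∧ epreC dis bund C (σ.get j) (σ.get h)
    · -- removed pair: use the order on C
      obtain ⟨_, _, hpre⟩ := hrm
      subst hset
      have hle := epre_indexOf_le hirr hstab ht hpre
      have hnd := trace_nodup ht
      have hij : σ.idxOf (σ.get j) = (j : ℕ) := by
        simpa using hnd.idxOf_getElem j j.2
      have hih : σ.idxOf (σ.get h) = (h : ℕ) := by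
        simpa using hnd.idxOf_getElem h h.2
      rw [hij, hih] at hle
      have : (j : ℕ) ≠ (h : ℕ) := fun heq => hne (by congr 1; exact Fin.ext heq)
      omega
    · exact hp i hi j h hne hj hh ⟨hpr, hrm⟩
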